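/- Let C ≥ 1, let L : Fin C → ℝ satisfy S := Σ_i L_i² > 0 and D := Σ_m (1 − C·L_m²/S)² > 0, and define α_j := (1 − C·L_j²/S)/√D. Let p, q : Fin C → ℝ satisfy Σ_i p_i = 1 and Σ_i q_i = 1. Set A := 1 + Σ_i (p_i − q_i)² and B := Σ_i q_i L_i², and assume B > 0. If there exists λ ∈ ℝ such that 2(q_j − p_j)·B + L_j²·A = λ for every j ∈ Fin C, then for every j ∈ Fin C: q_j = p_j + α_j·√(A − 1). -/

import Mathlib

open Finset

/-- The zero-sum gradient-Lipschitz deviation factor `α_j` of Theorem 2 of the ISFL paper. -/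
noncomputable def isflAlpha (C : ℕ) (L : Fin C → ℝ) (j : Fin C) : ℝ :=
  (1 - (C : ℝ) * (L j) ^ 2 / ∑ i, (L i) ^ 2) /
    Real.sqrt (∑ m, (1 - (C : ℝ) * (L m) ^ 2 / ∑ i, (L i) ^ 2) ^ 2)

/-- Algebraic core of Theorem 2 (Optimal IS Probabilities) of the ISFL paper: any solution of
the interior KKT stationarity conditions has the water-filling form `q_j = p_j + α_j √(A−1)`. -/
theorem isfl_optimal_is_probabilities
    (C : ℕ) (hC : 1 ≤ C) (L : Fin C → ℝ)
    (hS : 0 < ∑ i, (L i) ^ 2)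
    (hD : 0 < ∑ m, (1 - (C : ℝ) * (L m) ^ 2 / ∑ i, (L i) ^ 2) ^ 2)
    (p q : Fin C → ℝ) (hp1 : ∑ i, p i = 1) (hq1 : ∑ i, q i = 1)
    (hB : 0 < ∑ i, q i * (L i) ^ 2)
    (lam : ℝ)
    (hstat : ∀ j, 2 * (q j - p j) * (∑ i, q i * (L i) ^ 2)
      + (L j) ^ 2 * (1 + ∑ i, (p i - q i) ^ 2) = lam) :
    ∀ j, q j = p j + isflAlpha C L j * Real.sqrt ((1 + ∑ i, (p i - q i) ^ 2) - 1) := by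
  set S := ∑ i, (L i) ^ 2 with hSdef
  set B := ∑ i, q i * (L i) ^ 2 with hBdef
  set A := 1 + ∑ i, (p i - q i) ^ 2 with hAdef
  set D := ∑ m, (1 - (C : ℝ) * (L m) ^ 2 / S) ^ 2 with hDdef
  have hCpos : (0 : ℝ) < C := by exact_mod_cast Nat.lt_of_lt_of_le Nat.zero_lt_one hC
  have hApos : (0 : ℝ) < A := by
    have : (0:ℝ) ≤ ∑ i, (p i - q i) ^ 2 := Finset.sum_nonneg fun i _ => sq_nonneg _
    linarith
  have hB' : B ≠ 0 := ne_of_gt hB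
  have hS' : S ≠ 0 := ne_of_gt hS
  have hC' : (C:ℝ) ≠ 0 := ne_of_gt hCpos
  -- sum the stationarity conditions
  have hsum : (C : ℝ) * lam = S * A := by
    have h0 : ∑ j : Fin C, (2 * (q j - p j) * B + (L j) ^ 2 * A) = ∑ j : Fin C, lam :=
      Finset.sum_congr rfl (fun j _ => hstat j)
    rw [Finset.sum_add_distrib] at h0
    have h1 : ∑ j : Fin C, 2 * (q j - p j) * B = 0 := by
      rw [← Finset.sum_mul, ← Finset.mul_sum, Finset.sum_sub_distrib, hp1, hq1]; ring
    have h2 : ∑ j : Fin C, (L j) ^ 2 * A = S * A := by rw [← Finset.sum_mul]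
    have h3 : ∑ _j : Fin C, lam = (C : ℝ) * lam := by
      simp [Finset.sum_const, Finset.card_univ]
    rw [h1, h2, h3] at h0
    linarith [h0]
  have hlam : lam = S * A / C := by
    field_simp
    linarith [hsum]
  set c := A * S / (2 * B * C) with hcdef
  have hcpos : 0 < c := by
    apply div_pos (mul_pos hApos hS)
    positivity
  have hkey : ∀ j, q j - p j = c * (1 - (C : ℝ) * (L j) ^ 2 / S) := by
    intro j
    have h := hstat j
    rw [hlam] at h
    have e1 : c * (1 - (C:ℝ) * (L j) ^ 2 / S) = (S * A / C - (L j) ^ 2 * A) / (2 * B) := by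
      rw [hcdef]; field_simp
    have h2 : S * A / (C:ℝ) - (L j) ^ 2 * A = 2 * (q j - p j) * B := by linarith
    rw [e1, h2]
    field_simp
  have hA1 : A - 1 = c ^ 2 * D := by
    have hA1' : A - 1 = ∑ i, (p i - q i) ^ 2 := by rw [hAdef]; ring
    rw [hA1', hDdef, Finset.mul_sum]
    apply Finset.sum_congr rfl
    intro i _
    have h := hkey i
    have hpq : p i - q i = -(c * (1 - (C : ℝ) * (L i) ^ 2 / S)) := by linarith
    rw [hpq]; ring
  have hsqrt : Real.sqrt (A - 1) = c * Real.sqrt D := by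
    rw [hA1, Real.sqrt_mul (sq_nonneg c), Real.sqrt_sq hcpos.le]
  intro j
  have hsD : Real.sqrt D ≠ 0 := by positivity
  rw [hsqrt, isflAlpha]
  have e : (1 - (C:ℝ) * (L j) ^ 2 / S) / Real.sqrt D * (c * Real.sqrt D)
      = c * (1 - (C:ℝ) * (L j) ^ 2 / S) := by
    field_simp
  rw [show (∑ m, (1 - (C : ℝ) * (L m) ^ 2 / ∑ i, (L i) ^ 2) ^ 2) = D from rfl]
  rw [show (∑ i, (L i) ^ 2) = S from rfl, e]
  linarith [hkey j]
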